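/- Let n ≥ 1 be an integer and let S be a χ²-random variable with n degrees of freedom. Then for every real x > 0 one has Pr[S − n ≥ 2√(n·x) + 2x] ≤ e^{−x}. -/

import Mathlib

open MeasureTheory ProbabilityTheory

lemma gauss_pdf_mul_exp (t x : ℝ) :
    gaussianPDFReal 0 1 x * Real.exp (t * x ^ 2)
      = (Real.sqrt (2 * Real.pi))⁻¹ * Real.exp (-(1/2 - t) * x ^ 2) := by
  unfold gaussianPDFReal
  rw [NNReal.coe_one, mul_one, mul_one, mul_assoc, ← Real.exp_add]
  ring_nf

lemma gaussianReal_one_eq :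
    gaussianReal 0 1
      = MeasureTheory.volume.withDensity
        (fun x => ((Real.toNNReal (gaussianPDFReal 0 1 x) : NNReal) : ENNReal)) := by
  rw [gaussianReal_of_var_ne_zero 0 one_ne_zero]
  rfl

lemma gauss_sq_integrable {t : ℝ} (ht : t < 1/2) :
    Integrable (fun y => Real.exp (t * y ^ 2)) (gaussianReal 0 1) := by
  rw [gaussianReal_one_eq,
    integrable_withDensity_iff_integrable_smul ((measurable_gaussianPDFReal 0 1).real_toNNReal)]
  have h2 : (0:ℝ) < 1/2 - t := by linarith
  have : (fun x : ℝ => (Real.toNNReal (gaussianPDFReal 0 1 x)) • Real.exp (t * x ^ 2))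
      = fun x => (Real.sqrt (2 * Real.pi))⁻¹ * Real.exp (-(1/2 - t) * x ^ 2) := by
    funext y
    rw [NNReal.smul_def, smul_eq_mul, Real.coe_toNNReal _ (gaussianPDFReal_nonneg 0 1 y),
      gauss_pdf_mul_exp]
  rw [this]
  exact (integrable_exp_neg_mul_sq h2).const_mul _

lemma gauss_sq_integral {t : ℝ} (ht : t < 1/2) :
    ∫ y, Real.exp (t * y ^ 2) ∂(gaussianReal 0 1) = (Real.sqrt (1 - 2*t))⁻¹ := by
  rw [gaussianReal_one_eq,
    integral_withDensity_eq_integral_smul ((measurable_gaussianPDFReal 0 1).real_toNNReal)]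
  have h2 : (0:ℝ) < 1/2 - t := by linarith
  have heq : (fun x : ℝ => (Real.toNNReal (gaussianPDFReal 0 1 x)) • Real.exp (t * x ^ 2))
      = fun x => (Real.sqrt (2 * Real.pi))⁻¹ * Real.exp (-(1/2 - t) * x ^ 2) := by
    funext y
    rw [NNReal.smul_def, smul_eq_mul, Real.coe_toNNReal _ (gaussianPDFReal_nonneg 0 1 y),
      gauss_pdf_mul_exp]
  rw [heq, integral_const_mul, integral_gaussian]
  rw [show Real.pi / (1/2 - t) = (1 - 2*t)⁻¹ * (2 * Real.pi) by
    field_simp]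
  rw [Real.sqrt_mul (inv_nonneg.mpr (by linarith : (0:ℝ) ≤ 1 - 2*t)) (2 * Real.pi), Real.sqrt_inv,
    mul_comm (Real.sqrt (1 - 2*t))⁻¹, ← mul_assoc,
    inv_mul_cancel₀ (by positivity : Real.sqrt (2*Real.pi) ≠ 0), one_mul]

lemma sqrt_inv_le_exp {t : ℝ} (ht0 : 0 ≤ t) (ht : t < 1/2) :
    (Real.sqrt (1 - 2*t))⁻¹ ≤ Real.exp (t + t^2/(1 - 2*t)) := by
  have hc : (0:ℝ) < 1 - 2*t := by linarith
  set u : ℝ := 2*t^2/(1 - 2*t) with hudef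
  have hu0 : 0 ≤ u := by positivity
  have hu : u * (1 - 2*t) = 2*t^2 := by rw [hudef]; field_simp
  have hq : 1 ≤ (1 + (2*t+u) + (2*t+u)^2/2) * (1 - 2*t) := by
    nlinarith [sq_nonneg u, mul_nonneg ht0 hu0, mul_nonneg (mul_nonneg hu0 hu0) hc.le,
      mul_nonneg (mul_nonneg ht0 hu0) hc.le, mul_nonneg ht0 ht0]
  have hE : 1 + (2*t+u) + (2*t+u)^2/2 ≤ Real.exp (2*t+u) := by
    have h := Real.sum_le_exp_of_nonneg (by positivity : (0:ℝ) ≤ 2*t+u) 3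
    simp [Finset.sum_range_succ, Nat.factorial] at h
    linarith
  have hfinal : (1 - 2*t)⁻¹ ≤ Real.exp (2*t+u) := by
    rw [inv_eq_one_div, div_le_iff₀ hc]
    nlinarith [mul_le_mul_of_nonneg_right hE hc.le]
  calc (Real.sqrt (1 - 2*t))⁻¹ = Real.sqrt ((1 - 2*t)⁻¹) := (Real.sqrt_inv _).symm
    _ ≤ Real.sqrt (Real.exp (2*t+u)) := Real.sqrt_le_sqrt hfinal
    _ = Real.exp (t + t^2/(1 - 2*t)) := by
        rw [show 2*t+u = (t + t^2/(1 - 2*t)) + (t + t^2/(1 - 2*t)) by rw [hudef]; ring,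
          Real.exp_add, Real.sqrt_mul_self (Real.exp_nonneg _)]


/-- **Upper tail bound for the χ² distribution (Laurent–Massart).**
If `S = ∑ i, (G i)²` where `G 1, …, G n` are i.i.d. standard real Gaussians, then for
every `x > 0`, `Pr[S - n ≥ 2√(n x) + 2 x] ≤ exp (-x)`. -/
theorem chiSq_upper_tail
    {Ω : Type*} [MeasurableSpace Ω] (μ : Measure Ω) [IsProbabilityMeasure μ]
    (n : ℕ) (hn : 1 ≤ n) (G : Fin n → Ω → ℝ)
    (hmeas : ∀ i, Measurable (G i))
    (hgauss : ∀ i, Measure.map (G i) μ = gaussianReal 0 1)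
    (hindep : iIndepFun G μ)
    (S : Ω → ℝ) (hS : ∀ ω, S ω = ∑ i, (G i ω) ^ 2)
    (x : ℝ) (hx : 0 < x) :
    μ {ω | 2 * Real.sqrt (n * x) + 2 * x ≤ S ω - n} ≤ ENNReal.ofReal (Real.exp (-x)) := by
  classical
  set m := Real.sqrt n with hmdef
  set s := Real.sqrt x with hsdef
  have hnpos : (0:ℝ) < n := by exact_mod_cast Nat.lt_of_lt_of_le Nat.zero_lt_one hn
  have hm0 : 0 < m := Real.sqrt_pos.mpr hnpos
  have hs0 : 0 < s := Real.sqrt_pos.mpr hx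
  set t := s / (m + 2*s) with htdef
  have hden : 0 < m + 2*s := by linarith
  have ht0 : 0 ≤ t := by positivity
  have htlt : t < 1/2 := by rw [htdef, div_lt_iff₀ hden]; linarith
  have hc : (0:ℝ) < 1 - 2*t := by linarith
  set X : Fin n → Ω → ℝ := fun i ω => G i ω ^ 2 with hXdef
  have hXmeas : ∀ i, Measurable (X i) := fun i => (hmeas i).pow_const 2
  have hXindep : iIndepFun X μ :=
    hindep.comp (fun _ y => y ^ 2) (fun _ => measurable_id.pow_const 2)
  have hXint : ∀ i, Integrable (fun ω => Real.exp (t * X i ω)) μ := by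
    intro i
    have h1 : Integrable (fun y => Real.exp (t * y ^ 2)) (Measure.map (G i) μ) := by
      rw [hgauss i]; exact gauss_sq_integrable htlt
    exact (integrable_map_measure (((measurable_id.pow_const 2).const_mul t).exp.aestronglyMeasurable) (hmeas i).aemeasurable).mp h1
  have hmgfX : ∀ i, mgf (X i) μ t = (Real.sqrt (1 - 2*t))⁻¹ := by
    intro i
    calc mgf (X i) μ t = ∫ ω, Real.exp (t * (G i ω) ^ 2) ∂μ := rfl
      _ = ∫ y, Real.exp (t * y ^ 2) ∂(Measure.map (G i) μ) :=
          (integral_map (hmeas i).aemeasurable (((measurable_id.pow_const 2).const_mul t).exp.aestronglyMeasurable)).symm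
      _ = (Real.sqrt (1 - 2*t))⁻¹ := by rw [hgauss i]; exact gauss_sq_integral htlt
  have hSsum : S = ∑ i, X i := by
    funext ω; rw [hS]; simp [hXdef, Finset.sum_apply]
  set ε : ℝ := n + (2 * Real.sqrt (n*x) + 2*x) with hεdef
  have hset : {ω | 2 * Real.sqrt (↑n * x) + 2 * x ≤ S ω - ↑n} = {ω | ε ≤ S ω} := by
    ext ω
    simp only [Set.mem_setOf_eq, hεdef]
    constructor <;> intro h <;> linarith
  rw [hset]
  have hmgfS : mgf S μ t = ((Real.sqrt (1 - 2*t))⁻¹) ^ n := by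
    rw [hSsum, hXindep.mgf_sum hXmeas]
    simp [hmgfX]
  have hIntS : Integrable (fun ω => Real.exp (t * S ω)) μ := by
    rw [hSsum]; exact hXindep.integrable_exp_mul_sum hXmeas (fun i _ => hXint i)
  have hchern := measure_ge_le_exp_mul_mgf (μ := μ) (X := S) ε ht0 hIntS
  have hms : Real.sqrt (↑n * x) = m * s := by
    rw [hmdef, hsdef, Real.sqrt_mul (Nat.cast_nonneg n)]
  have hm2 : m^2 = n := Real.sq_sqrt (Nat.cast_nonneg n)
  have hs2 : s^2 = x := Real.sq_sqrt hx.le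
  have hbound : Real.exp (-t*ε) * mgf S μ t ≤ Real.exp (-x) := by
    rw [hmgfS]
    have h1 : ((Real.sqrt (1 - 2*t))⁻¹) ^ n ≤ Real.exp (t + t^2/(1 - 2*t)) ^ n :=
      pow_le_pow_left₀ (inv_nonneg.mpr (Real.sqrt_nonneg _)) (sqrt_inv_le_exp ht0 htlt) n
    calc Real.exp (-t*ε) * ((Real.sqrt (1 - 2*t))⁻¹) ^ n
        ≤ Real.exp (-t*ε) * Real.exp (t + t^2/(1 - 2*t)) ^ n :=
          mul_le_mul_of_nonneg_left h1 (Real.exp_nonneg _)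
      _ = Real.exp (-t*ε + n*(t + t^2/(1 - 2*t))) := by
          rw [← Real.exp_nat_mul, ← Real.exp_add]
      _ ≤ Real.exp (-x) := by
          apply Real.exp_le_exp.mpr
          have heq : -t*ε + n*(t + t^2/(1 - 2*t)) = -x := by
            rw [hεdef, hms, ← hm2, ← hs2, htdef]
            have h2 : m + 2*s - 2*s = m := by ring
            field_simp [hm0.ne']
            ring
          linarith [heq.le]
  calc μ {ω | ε ≤ S ω}
      = ENNReal.ofReal ((μ {ω | ε ≤ S ω}).toReal) :=
        (ENNReal.ofReal_toReal (measure_ne_top _ _)).symm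
    _ ≤ ENNReal.ofReal (Real.exp (-x)) :=
        ENNReal.ofReal_le_ofReal (hchern.trans hbound)
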